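/- Let B ∈ C² with div(B) = 0 and B(y) ≠ 0 for all y ∈ ℝ³, fix x₀, v₀ ∈ ℝ³, set h_ω(t) := v_ω(t) · b(x_ω(t)) and define the particle's magnetic moment μ_ω(t) := (|v₀|² − h_ω(t)²)/(2|B(x_ω(t))|). Then for every T > 0, sup_{t ∈ [0,T]} |μ_ω(t) − μ₀| → 0 as ω → ∞; i.e. the magnetic moment converges uniformly on compact time intervals to the constant μ₀ (adiabatic invariance of the magnetic moment). -/

import Mathlib

noncomputable section

open Real Filter Topology MeasureTheory intervalIntegral Bornology

abbrev E3 : Type := EuclideanSpace ℝ (Fin 3)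

def cross3 (u v : E3) : E3 :=
  (WithLp.equiv 2 (Fin 3 → ℝ)).symm
    ![u 1 * v 2 - u 2 * v 1, u 2 * v 0 - u 0 * v 2, u 0 * v 1 - u 1 * v 0]

def divg (F : E3 → E3) (y : E3) : ℝ :=
  ∑ i : Fin 3, fderiv ℝ F y (EuclideanSpace.single i (1:ℝ)) i

def curl3 (F : E3 → E3) (y : E3) : E3 :=
  (WithLp.equiv 2 (Fin 3 → ℝ)).symm
    ![fderiv ℝ F y (EuclideanSpace.single 1 (1:ℝ)) 2 - fderiv ℝ F y (EuclideanSpace.single 2 (1:ℝ)) 1,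
      fderiv ℝ F y (EuclideanSpace.single 2 (1:ℝ)) 0 - fderiv ℝ F y (EuclideanSpace.single 0 (1:ℝ)) 2,
      fderiv ℝ F y (EuclideanSpace.single 0 (1:ℝ)) 1 - fderiv ℝ F y (EuclideanSpace.single 1 (1:ℝ)) 0]

def bdir (B : E3 → E3) (y : E3) : E3 := ‖B y‖⁻¹ • B y

def IsLorentzSol (B : E3 → E3) (ω : ℝ) (x₀ v₀ : E3) (x : ℝ → E3) : Prop :=
  x 0 = x₀ ∧ deriv x 0 = v₀ ∧ Differentiable ℝ x ∧
    ∀ t : ℝ, HasDerivAt (deriv x) (ω • cross3 (deriv x t) (B (x t))) t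

def IsLimitSol (B : E3 → E3) (x₀ v₀ : E3) (x : ℝ → E3) (h : ℝ → ℝ) : Prop :=
  x 0 = x₀ ∧ h 0 = (inner ℝ v₀ (bdir B x₀) : ℝ) ∧
    (∀ t : ℝ, HasDerivAt x (h t • bdir B (x t)) t) ∧
    (∀ t : ℝ, HasDerivAt h ((‖v₀‖ ^ 2 - h t ^ 2) / 2 * divg (bdir B) (x t)) t)

def IsCkBounded (k : ℕ) (B : E3 → E3) : Prop :=
  ContDiff ℝ k B ∧ ∀ i ≤ k, ∃ M : ℝ, ∀ y : E3, ‖iteratedFDeriv ℝ i B y‖ ≤ M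

def MinimalGrowth (γ : ℝ) (B : E3 → E3) : Prop :=
  ∃ R C : ℝ, 0 < R ∧ 0 < C ∧ ∀ y : E3, R ≤ ‖y‖ → C / ‖y‖ ^ γ ≤ ‖B y‖

lemma cross3_zero (u v : E3) : cross3 u v 0 = u 1 * v 2 - u 2 * v 1 := rfl
lemma cross3_one (u v : E3) : cross3 u v 1 = u 2 * v 0 - u 0 * v 2 := rfl
lemma cross3_two (u v : E3) : cross3 u v 2 = u 0 * v 1 - u 1 * v 0 := rfl

lemma inner3 (u v : E3) : (inner ℝ u v : ℝ) = u 0 * v 0 + u 1 * v 1 + u 2 * v 2 := by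
  simp [PiLp.inner_apply, Fin.sum_univ_three, mul_comm]

example (u v : E3) : (inner ℝ u (cross3 u v) : ℝ) = 0 := by
  rw [inner3, cross3_zero, cross3_one, cross3_two]; ring

lemma e3_ext {u v : E3} (h0 : u 0 = v 0) (h1 : u 1 = v 1) (h2 : u 2 = v 2) : u = v := by
  ext i; fin_cases i <;> assumption

def crossl : E3 →ₗ[ℝ] E3 →ₗ[ℝ] E3 :=
  LinearMap.mk₂ ℝ cross3
    (fun u u' v => by
      apply e3_ext <;>
        simp only [cross3_zero, cross3_one, cross3_two, PiLp.add_apply] <;> ring)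
    (fun r u v => by
      apply e3_ext <;>
        simp only [cross3_zero, cross3_one, cross3_two, PiLp.smul_apply, smul_eq_mul] <;> ring)
    (fun u v v' => by
      apply e3_ext <;>
        simp only [cross3_zero, cross3_one, cross3_two, PiLp.add_apply] <;> ring)
    (fun r u v => by
      apply e3_ext <;>
        simp only [cross3_zero, cross3_one, cross3_two, PiLp.smul_apply, smul_eq_mul] <;> ring)

def crossL : E3 →L[ℝ] E3 →L[ℝ] E3 :=
  LinearMap.toContinuousLinearMap
    { toFun := fun u => LinearMap.toContinuousLinearMap (crossl u)
      map_add' := fun u u' => by ext v; simp [crossl]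
      map_smul' := fun r u => by ext v; simp [crossl] }

lemma crossL_apply (u v : E3) : crossL u v = cross3 u v := rfl

lemma hasDerivAt_cross {f g : ℝ → E3} {f' g' : E3} {x : ℝ}
    (hf : HasDerivAt f f' x) (hg : HasDerivAt g g' x) :
    HasDerivAt (fun t => cross3 (f t) (g t)) (cross3 f' (g x) + cross3 (f x) g') x := by
  have h1 : HasDerivAt (fun t => crossL (f t)) (crossL f') x :=
    crossL.hasFDerivAt.comp_hasDerivAt x hf
  simpa [crossL_apply] using h1.clm_apply hg
lemma gyro_scalar (q00 q01 q02 q10 q11 q12 q20 q21 q22 u0 u1 u2 b0 b1 b2 : ℝ)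
    (hub : (u0*b0+u1*b1+u2*b2) = 0) (hb : b0*b0+b1*b1+b2*b2 = 1) :
    (q00*u0*u0 + q01*u0*u1 + q02*u0*u2 + q10*u1*u0 + q11*u1*u1 + q12*u1*u2 + q20*u2*u0 + q21*u2*u1 + q22*u2*u2) + (q00*(u1*b2-u2*b1)*(u1*b2-u2*b1) + q01*(u1*b2-u2*b1)*(u2*b0-u0*b2) + q02*(u1*b2-u2*b1)*(u0*b1-u1*b0) + q10*(u2*b0-u0*b2)*(u1*b2-u2*b1) + q11*(u2*b0-u0*b2)*(u2*b0-u0*b2) + q12*(u2*b0-u0*b2)*(u0*b1-u1*b0) + q20*(u0*b1-u1*b0)*(u1*b2-u2*b1) + q21*(u0*b1-u1*b0)*(u2*b0-u0*b2) + q22*(u0*b1-u1*b0)*(u0*b1-u1*b0)) + (u0*u0+u1*u1+u2*u2)*(q00*b0*b0 + q01*b0*b1 + q02*b0*b2 + q10*b1*b0 + q11*b1*b1 + q12*b1*b2 + q20*b2*b0 + q21*b2*b1 + q22*b2*b2) = (u0*u0+u1*u1+u2*u2)*(q00+q11+q22) := by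
  linear_combination ((q00*u0*b0 + q01*u0*b1 + q02*u0*b2 + q10*u1*b0 + q11*u1*b1 + q12*u1*b2 + q20*u2*b0 + q21*u2*b1 + q22*u2*b2 + q00*b0*u0 + q01*b0*u1 + q02*b0*u2 + q10*b1*u0 + q11*b1*u1 + q12*b1*u2 + q20*b2*u0 + q21*b2*u1 + q22*b2*u2 - (u0*b0+u1*b1+u2*b2)*(q00+q11+q22)))*hub + ((-(q00*u0*u0 + q01*u0*u1 + q02*u0*u2 + q10*u1*u0 + q11*u1*u1 + q12*u1*u2 + q20*u2*u0 + q21*u2*u1 + q22*u2*u2) + (u0*u0+u1*u1+u2*u2)*(q00+q11+q22)))*hb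

abbrev e3 (i : Fin 3) : E3 := EuclideanSpace.single i (1:ℝ)

lemma decomp3 (x : E3) : x = x 0 • e3 0 + x 1 • e3 1 + x 2 • e3 2 := by
  apply e3_ext <;>
    simp [e3, EuclideanSpace.single_apply]

lemma clm_coord (Q : E3 →L[ℝ] E3) (x : E3) (i : Fin 3) :
    Q x i = x 0 * Q (e3 0) i + x 1 * Q (e3 1) i + x 2 * Q (e3 2) i := by
  conv_lhs => rw [decomp3 x]
  simp

def trQ (Q : E3 →L[ℝ] E3) : ℝ := ∑ i : Fin 3, Q (e3 i) i

lemma gyro_identity (Q : E3 →L[ℝ] E3) (u b : E3)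
    (hub : (inner ℝ u b : ℝ) = 0) (hb : (inner ℝ b b : ℝ) = 1) :
    (inner ℝ u (Q u) : ℝ) + (inner ℝ (cross3 u b) (Q (cross3 u b)) : ℝ)
      + (inner ℝ u u : ℝ) * (inner ℝ b (Q b) : ℝ) = (inner ℝ u u : ℝ) * trQ Q := by
  rw [inner3] at hub hb
  simp only [inner3, trQ, Fin.sum_univ_three,
    clm_coord Q u, clm_coord Q b, clm_coord Q (cross3 u b),
    cross3_zero, cross3_one, cross3_two]
  have := gyro_scalar (Q (e3 0) 0) (Q (e3 1) 0) (Q (e3 2) 0)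
    (Q (e3 0) 1) (Q (e3 1) 1) (Q (e3 2) 1)
    (Q (e3 0) 2) (Q (e3 1) 2) (Q (e3 2) 2)
    (u 0) (u 1) (u 2) (b 0) (b 1) (b 2) hub hb
  linarith [this]

lemma cross3_self (v : E3) : cross3 v v = 0 := by
  apply e3_ext <;> simp [cross3_zero, cross3_one, cross3_two] <;> ring

lemma inner_cross_left (u v : E3) : (inner ℝ u (cross3 u v) : ℝ) = 0 := by
  rw [inner3, cross3_zero, cross3_one, cross3_two]; ring

lemma inner_cross_right (u v : E3) : (inner ℝ v (cross3 u v) : ℝ) = 0 := by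
  rw [inner3, cross3_zero, cross3_one, cross3_two]; ring

lemma triple_cross (u b : E3) :
    cross3 (cross3 u b) b = (inner ℝ u b : ℝ) • b - (inner ℝ b b : ℝ) • u := by
  apply e3_ext <;>
    simp only [cross3_zero, cross3_one, cross3_two, PiLp.sub_apply, PiLp.smul_apply,
      smul_eq_mul, inner3] <;> ring


section Field

variable {B : E3 → E3}

lemma nB_ne (hB0 : ∀ y : E3, B y ≠ 0) (y : E3) : ‖B y‖ ≠ 0 :=
  norm_ne_zero_iff.mpr (hB0 y)

lemma contDiff_nB (hB2 : ContDiff ℝ 2 B) (hB0 : ∀ y : E3, B y ≠ 0) :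
    ContDiff ℝ 2 (fun y => ‖B y‖) := hB2.norm ℝ hB0

lemma contDiff_bdir (hB2 : ContDiff ℝ 2 B) (hB0 : ∀ y : E3, B y ≠ 0) :
    ContDiff ℝ 2 (bdir B) :=
  ((contDiff_nB hB2 hB0).inv (nB_ne hB0)).smul hB2

lemma bdir_unit (hB0 : ∀ y : E3, B y ≠ 0) (y : E3) : ‖bdir B y‖ = 1 := by
  rw [bdir, norm_smul, norm_inv, norm_norm, inv_mul_cancel₀ (nB_ne hB0 y)]

lemma bdir_inner_one (hB0 : ∀ y : E3, B y ≠ 0) (y : E3) :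
    (inner ℝ (bdir B y) (bdir B y) : ℝ) = 1 := by
  rw [real_inner_self_eq_norm_sq, bdir_unit hB0 y, one_pow]

lemma B_eq_smul (hB0 : ∀ y : E3, B y ≠ 0) (y : E3) : B y = ‖B y‖ • bdir B y := by
  rw [bdir, smul_inv_smul₀ (nB_ne hB0 y)]

lemma clm_coordR (N : E3 →L[ℝ] ℝ) (x : E3) :
    N x = x 0 * N (e3 0) + x 1 * N (e3 1) + x 2 * N (e3 2) := by
  conv_lhs => rw [decomp3 x]
  simp

lemma bdir_diff (hB2 : ContDiff ℝ 2 B) (hB0 : ∀ y : E3, B y ≠ 0) (y : E3) :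
    HasFDerivAt (bdir B) (fderiv ℝ (bdir B) y) y :=
  ((contDiff_bdir hB2 hB0).differentiable (by norm_num) y).hasFDerivAt

lemma nB_diff (hB2 : ContDiff ℝ 2 B) (hB0 : ∀ y : E3, B y ≠ 0) (y : E3) :
    HasFDerivAt (fun y => ‖B y‖) (fderiv ℝ (fun y => ‖B y‖) y) y :=
  ((contDiff_nB hB2 hB0).differentiable (by norm_num) y).hasFDerivAt

lemma rel_C (hB2 : ContDiff ℝ 2 B) (hB0 : ∀ y : E3, B y ≠ 0) (y : E3) (z : E3) :
    (inner ℝ (bdir B y) (fderiv ℝ (bdir B) y z) : ℝ) = 0 := by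
  have hg : HasFDerivAt (fun y => (inner ℝ (bdir B y) (bdir B y) : ℝ))
      ((fderivInnerCLM ℝ (bdir B y, bdir B y)).comp
        ((fderiv ℝ (bdir B) y).prod (fderiv ℝ (bdir B) y))) y :=
    (bdir_diff hB2 hB0 y).inner ℝ (bdir_diff hB2 hB0 y)
  have hconst : (fun y => (inner ℝ (bdir B y) (bdir B y) : ℝ)) = fun _ => (1:ℝ) :=
    funext fun y => bdir_inner_one hB0 y
  rw [hconst] at hg
  have h0 : ((fderivInnerCLM ℝ (bdir B y, bdir B y)).comp
      ((fderiv ℝ (bdir B) y).prod (fderiv ℝ (bdir B) y))) = 0 := by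
    have := (hasFDerivAt_const (1:ℝ) y).unique hg
    exact this.symm
  have happ := congrArg (fun L => (L : E3 →L[ℝ] ℝ) z) h0
  simp only [ContinuousLinearMap.comp_apply, ContinuousLinearMap.prod_apply,
    fderivInnerCLM_apply, ContinuousLinearMap.zero_apply] at happ
  have := real_inner_comm (fderiv ℝ (bdir B) y z) (bdir B y)
  linarith [happ]

lemma rel_B (hB2 : ContDiff ℝ 2 B) (hB0 : ∀ y : E3, B y ≠ 0)
    (hdiv : ∀ y : E3, (∑ i : Fin 3, fderiv ℝ B y (EuclideanSpace.single i (1:ℝ)) i) = 0)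
    (y : E3) :
    (fderiv ℝ (fun y => ‖B y‖) y) (bdir B y) + ‖B y‖ * trQ (fderiv ℝ (bdir B) y) = 0 := by
  set N := fderiv ℝ (fun y => ‖B y‖) y with hN
  set Q := fderiv ℝ (bdir B) y with hQ
  set b := bdir B y with hb
  have hD : HasFDerivAt B (‖B y‖ • Q + N.smulRight b) y := by
    have h := (nB_diff hB2 hB0 y).smul (bdir_diff hB2 hB0 y)
    have hBeq : B = (fun y => ‖B y‖) • bdir B := funext (B_eq_smul hB0)
    rw [← hBeq] at h
    exact h
  have hfd : fderiv ℝ B y = ‖B y‖ • Q + N.smulRight b := hD.fderiv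
  have h0 := hdiv y
  rw [hfd] at h0
  simp only [ContinuousLinearMap.add_apply, ContinuousLinearMap.smul_apply,
    ContinuousLinearMap.smulRight_apply, PiLp.add_apply, PiLp.smul_apply,
    smul_eq_mul, Fin.sum_univ_three] at h0
  have hNb : N b = b 0 * N (e3 0) + b 1 * N (e3 1) + b 2 * N (e3 2) := clm_coordR N b
  simp only [trQ, Fin.sum_univ_three]
  simp only [e3] at hNb ⊢
  linarith [h0, hNb]

section Funcs
variable (B : E3 → E3) (c₀ : ℝ)

def Qf (x : E3) : E3 →L[ℝ] E3 := fderiv ℝ (bdir B) x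
def Nf (x : E3) : E3 →L[ℝ] ℝ := fderiv ℝ (fun y => ‖B y‖) x
def hvf (x v : E3) : ℝ := inner ℝ v (bdir B x)
def uvf (x v : E3) : E3 := v - hvf B x v • bdir B x
def wvf (x v : E3) : E3 := cross3 (uvf B x v) (bdir B x)
def Avf (x v : E3) : ℝ := inner ℝ v (Qf B x v)
def Rvf (x v : E3) : E3 := -(Avf B x v • bdir B x) - hvf B x v • (Qf B x v)
def Pvf (x v : E3) : E3 :=
  -(hvf B x v • cross3 (Qf B x v) (bdir B x)) + cross3 (uvf B x v) (Qf B x v)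

def Psif (x v : E3) : ℝ :=
  (-(hvf B x v)/(2*‖B x‖^2)) * (inner ℝ (uvf B x v) (Qf B x (wvf B x v)) : ℝ)
  + (-(hvf B x v)^2/(‖B x‖^2)) * (inner ℝ (wvf B x v) (Qf B x (bdir B x)) : ℝ)
  + (-(c₀ - (hvf B x v)^2)/(2*‖B x‖^3)) * (Nf B x (wvf B x v))

def Gf (x v : E3) : ℝ :=
  (-(Avf B x v)/(2*‖B x‖^2) + hvf B x v * (Nf B x v)/‖B x‖^3)
      * (inner ℝ (uvf B x v) (Qf B x (wvf B x v)) : ℝ)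
  + (-(2*hvf B x v*Avf B x v)/‖B x‖^2 + 2*(hvf B x v)^2*(Nf B x v)/‖B x‖^3)
      * (inner ℝ (wvf B x v) (Qf B x (bdir B x)) : ℝ)
  + (hvf B x v*Avf B x v/‖B x‖^3 + 3*(c₀-(hvf B x v)^2)*(Nf B x v)/(2*‖B x‖^4))
      * (Nf B x (wvf B x v))
  + (-(hvf B x v)/(2*‖B x‖^2)) *
      ((inner ℝ (uvf B x v) (fderiv ℝ (Qf B) x v (wvf B x v)) : ℝ)
        + (inner ℝ (uvf B x v) (Qf B x (Pvf B x v)) : ℝ)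
        + (inner ℝ (Rvf B x v) (Qf B x (wvf B x v)) : ℝ))
  + (-(hvf B x v)^2/(‖B x‖^2)) *
      ((inner ℝ (Pvf B x v) (Qf B x (bdir B x)) : ℝ)
        + (inner ℝ (wvf B x v) (fderiv ℝ (Qf B) x v (bdir B x)) : ℝ)
        + (inner ℝ (wvf B x v) (Qf B x (Qf B x v)) : ℝ))
  + (-(c₀-(hvf B x v)^2)/(2*‖B x‖^3)) *
      ((fderiv ℝ (Nf B) x v) (wvf B x v) + Nf B x (Pvf B x v))

end Funcs

section Cont
variable {B : E3 → E3} (hB2 : ContDiff ℝ 2 B) (hB0 : ∀ y : E3, B y ≠ 0)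
include hB2 hB0

lemma cont_n : Continuous fun p : E3 × E3 => ‖B p.1‖ :=
  ((contDiff_nB hB2 hB0).continuous).comp continuous_fst

lemma cont_b : Continuous fun p : E3 × E3 => bdir B p.1 :=
  ((contDiff_bdir hB2 hB0).continuous).comp continuous_fst

lemma contdiff_Qf : ContDiff ℝ 1 (Qf B) :=
  (contDiff_bdir hB2 hB0).fderiv_right (by norm_num)

lemma contdiff_Nf : ContDiff ℝ 1 (Nf B) :=
  (contDiff_nB hB2 hB0).fderiv_right (by norm_num)

lemma cont_Q : Continuous fun p : E3 × E3 => Qf B p.1 :=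
  (contdiff_Qf hB2 hB0).continuous.comp continuous_fst

lemma cont_N : Continuous fun p : E3 × E3 => Nf B p.1 :=
  (contdiff_Nf hB2 hB0).continuous.comp continuous_fst

lemma cont_Q2 : Continuous fun p : E3 × E3 => fderiv ℝ (Qf B) p.1 p.2 :=
  (((contdiff_Qf hB2 hB0).continuous_fderiv one_ne_zero).comp continuous_fst).clm_apply
    continuous_snd

lemma cont_N2 : Continuous fun p : E3 × E3 => fderiv ℝ (Nf B) p.1 p.2 :=
  (((contdiff_Nf hB2 hB0).continuous_fderiv one_ne_zero).comp continuous_fst).clm_apply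
    continuous_snd

omit hB2 hB0 in
lemma cont_cross {α : Type*} [TopologicalSpace α] {f g : α → E3}
    (hf : Continuous f) (hg : Continuous g) : Continuous fun a => cross3 (f a) (g a) := by
  have : Continuous fun a => crossL (f a) (g a) :=
    ((crossL.continuous).comp hf).clm_apply hg
  simpa [crossL_apply] using this

lemma cont_h : Continuous fun p : E3 × E3 => hvf B p.1 p.2 :=
  continuous_snd.inner (cont_b hB2 hB0)

lemma cont_u : Continuous fun p : E3 × E3 => uvf B p.1 p.2 :=
  continuous_snd.sub ((cont_h hB2 hB0).smul (cont_b hB2 hB0))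

lemma cont_w : Continuous fun p : E3 × E3 => wvf B p.1 p.2 :=
  cont_cross (cont_u hB2 hB0) (cont_b hB2 hB0)

lemma cont_A : Continuous fun p : E3 × E3 => Avf B p.1 p.2 :=
  continuous_snd.inner ((cont_Q hB2 hB0).clm_apply continuous_snd)

lemma cont_R : Continuous fun p : E3 × E3 => Rvf B p.1 p.2 :=
  (((cont_A hB2 hB0).smul (cont_b hB2 hB0)).neg).sub
    ((cont_h hB2 hB0).smul ((cont_Q hB2 hB0).clm_apply continuous_snd))

lemma cont_P : Continuous fun p : E3 × E3 => Pvf B p.1 p.2 :=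
  (((cont_h hB2 hB0).smul
      (cont_cross ((cont_Q hB2 hB0).clm_apply continuous_snd) (cont_b hB2 hB0))).neg).add
    (cont_cross (cont_u hB2 hB0) ((cont_Q hB2 hB0).clm_apply continuous_snd))

lemma cont_Psif (c₀ : ℝ) : Continuous fun p : E3 × E3 => Psif B c₀ p.1 p.2 := by
  have hn2 : ∀ p : E3 × E3, 2*‖B p.1‖^2 ≠ 0 := fun p => by
    have := nB_ne hB0 p.1; positivity
  have hn3 : ∀ p : E3 × E3, 2*‖B p.1‖^3 ≠ 0 := fun p => by
    have := nB_ne hB0 p.1; positivity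
  unfold Psif
  apply Continuous.add
  apply Continuous.add
  · exact (((cont_h hB2 hB0).neg).div (continuous_const.mul ((cont_n hB2 hB0).pow 2)) hn2).mul
      ((cont_u hB2 hB0).inner ((cont_Q hB2 hB0).clm_apply (cont_w hB2 hB0)))
  · exact ((((cont_h hB2 hB0).pow 2).neg).div ((cont_n hB2 hB0).pow 2)
        (fun p => pow_ne_zero 2 (nB_ne hB0 p.1))).mul
      ((cont_w hB2 hB0).inner ((cont_Q hB2 hB0).clm_apply (cont_b hB2 hB0)))
  · exact (((continuous_const.sub ((cont_h hB2 hB0).pow 2)).neg).div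
        (continuous_const.mul ((cont_n hB2 hB0).pow 3)) hn3).mul
      ((cont_N hB2 hB0).clm_apply (cont_w hB2 hB0))

lemma cont_Gf (c₀ : ℝ) : Continuous fun p : E3 × E3 => Gf B c₀ p.1 p.2 := by
  have hn := cont_n hB2 hB0
  have hb := cont_b hB2 hB0
  have hQ := cont_Q hB2 hB0
  have hN := cont_N hB2 hB0
  have hh := cont_h hB2 hB0
  have hu := cont_u hB2 hB0
  have hw := cont_w hB2 hB0
  have hA := cont_A hB2 hB0
  have hR := cont_R hB2 hB0
  have hP := cont_P hB2 hB0
  have hQ2 := cont_Q2 hB2 hB0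
  have hN2 := cont_N2 hB2 hB0
  have hNv : Continuous fun p : E3 × E3 => Nf B p.1 p.2 := hN.clm_apply continuous_snd
  have hQw : Continuous fun p : E3 × E3 => Qf B p.1 (wvf B p.1 p.2) := hQ.clm_apply hw
  have hQb : Continuous fun p : E3 × E3 => Qf B p.1 (bdir B p.1) := hQ.clm_apply hb
  have hne : ∀ (c : ℝ) (k : ℕ), c ≠ 0 → ∀ p : E3 × E3, c*‖B p.1‖^k ≠ 0 := fun c k hc p => by
    have := nB_ne hB0 p.1; positivity
  have hne1 : ∀ (k : ℕ), ∀ p : E3 × E3, ‖B p.1‖^k ≠ 0 := fun k p => by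
    have := nB_ne hB0 p.1; positivity
  have hQ2w : Continuous fun p : E3 × E3 => fderiv ℝ (Qf B) p.1 p.2 (wvf B p.1 p.2) :=
    hQ2.clm_apply hw
  have hQ2b : Continuous fun p : E3 × E3 => fderiv ℝ (Qf B) p.1 p.2 (bdir B p.1) :=
    hQ2.clm_apply hb
  have hQv : Continuous fun p : E3 × E3 => Qf B p.1 p.2 := hQ.clm_apply continuous_snd
  have t1 : Continuous fun p : E3 × E3 =>
      (-(Avf B p.1 p.2)/(2*‖B p.1‖^2) + hvf B p.1 p.2 * (Nf B p.1 p.2)/‖B p.1‖^3)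
        * (inner ℝ (uvf B p.1 p.2) (Qf B p.1 (wvf B p.1 p.2)) : ℝ) :=
    (((hA.neg).div (continuous_const.mul (hn.pow 2)) (hne 2 2 two_ne_zero)).add
      ((hh.mul hNv).div (hn.pow 3) (hne1 3))).mul (hu.inner hQw)
  have t2 : Continuous fun p : E3 × E3 =>
      (-(2*hvf B p.1 p.2*Avf B p.1 p.2)/‖B p.1‖^2
          + 2*(hvf B p.1 p.2)^2*(Nf B p.1 p.2)/‖B p.1‖^3)
        * (inner ℝ (wvf B p.1 p.2) (Qf B p.1 (bdir B p.1)) : ℝ) :=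
    ((((continuous_const.mul hh).mul hA).neg.div (hn.pow 2) (hne1 2)).add
      (((continuous_const.mul (hh.pow 2)).mul hNv).div (hn.pow 3) (hne1 3))).mul
        (hw.inner hQb)
  have t3 : Continuous fun p : E3 × E3 =>
      (hvf B p.1 p.2*Avf B p.1 p.2/‖B p.1‖^3
          + 3*(c₀-(hvf B p.1 p.2)^2)*(Nf B p.1 p.2)/(2*‖B p.1‖^4))
        * (Nf B p.1 (wvf B p.1 p.2)) :=
    ((((hh.mul hA)).div (hn.pow 3) (hne1 3)).add
      (((continuous_const.mul (continuous_const.sub (hh.pow 2))).mul hNv).div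
        (continuous_const.mul (hn.pow 4)) (hne 2 4 two_ne_zero))).mul (hN.clm_apply hw)
  have t4 : Continuous fun p : E3 × E3 =>
      (-(hvf B p.1 p.2)/(2*‖B p.1‖^2)) *
        ((inner ℝ (uvf B p.1 p.2) (fderiv ℝ (Qf B) p.1 p.2 (wvf B p.1 p.2)) : ℝ)
          + (inner ℝ (uvf B p.1 p.2) (Qf B p.1 (Pvf B p.1 p.2)) : ℝ)
          + (inner ℝ (Rvf B p.1 p.2) (Qf B p.1 (wvf B p.1 p.2)) : ℝ)) :=
    ((hh.neg).div (continuous_const.mul (hn.pow 2)) (hne 2 2 two_ne_zero)).mul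
      (((hu.inner hQ2w).add (hu.inner (hQ.clm_apply hP))).add (hR.inner hQw))
  have t5 : Continuous fun p : E3 × E3 =>
      (-(hvf B p.1 p.2)^2/(‖B p.1‖^2)) *
        ((inner ℝ (Pvf B p.1 p.2) (Qf B p.1 (bdir B p.1)) : ℝ)
          + (inner ℝ (wvf B p.1 p.2) (fderiv ℝ (Qf B) p.1 p.2 (bdir B p.1)) : ℝ)
          + (inner ℝ (wvf B p.1 p.2) (Qf B p.1 (Qf B p.1 p.2)) : ℝ)) :=
    (((hh.pow 2).neg).div (hn.pow 2) (hne1 2)).mul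
      (((hP.inner hQb).add (hw.inner hQ2b)).add (hw.inner (hQ.clm_apply hQv)))
  have t6 : Continuous fun p : E3 × E3 =>
      (-(c₀-(hvf B p.1 p.2)^2)/(2*‖B p.1‖^3)) *
        ((fderiv ℝ (Nf B) p.1 p.2) (wvf B p.1 p.2) + Nf B p.1 (Pvf B p.1 p.2)) :=
    (((continuous_const.sub (hh.pow 2)).neg).div (continuous_const.mul (hn.pow 3))
      (hne 2 3 two_ne_zero)).mul ((hN2.clm_apply hw).add (hN.clm_apply hP))
  exact ((((t1.add t2).add t3).add t4).add t5).add t6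

end Cont

lemma cross3_add_left (a b c : E3) : cross3 (a + b) c = cross3 a c + cross3 b c := by
  show crossL (a + b) c = crossL a c + crossL b c
  simp [_root_.map_add]

lemma cross3_add_right (a b c : E3) : cross3 a (b + c) = cross3 a b + cross3 a c := by
  show crossL a (b + c) = crossL a b + crossL a c
  simp [_root_.map_add]

lemma cross3_smul_left (r : ℝ) (a c : E3) : cross3 (r • a) c = r • cross3 a c := by
  show crossL (r • a) c = r • crossL a c
  simp

lemma cross3_smul_right (r : ℝ) (a c : E3) : cross3 a (r • c) = r • cross3 a c := by
  show crossL a (r • c) = r • crossL a c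
  simp

lemma cross3_neg_left (a c : E3) : cross3 (-a) c = -cross3 a c := by
  show crossL (-a) c = -(crossL a c)
  simp

lemma cross3_sub_left (a b c : E3) : cross3 (a - b) c = cross3 a c - cross3 b c := by
  show crossL (a - b) c = crossL a c - crossL b c
  simp [map_sub]

section Traj

variable {B : E3 → E3} {ω : ℝ} {X : ℝ → E3} {v₀ : E3}

lemma energy (hLor : ∀ t : ℝ, HasDerivAt (deriv X) (ω • cross3 (deriv X t) (B (X t))) t)
    (hV0 : deriv X 0 = v₀) (t : ℝ) :
    (inner ℝ (deriv X t) (deriv X t) : ℝ) = (inner ℝ v₀ v₀ : ℝ) := by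
  have hg : ∀ s : ℝ, HasDerivAt (fun r => (inner ℝ (deriv X r) (deriv X r) : ℝ)) 0 s := by
    intro s
    have h := (hLor s).inner ℝ (hLor s)
    have hz : (inner ℝ (deriv X s) (ω • cross3 (deriv X s) (B (X s))) : ℝ)
        + (inner ℝ (ω • cross3 (deriv X s) (B (X s))) (deriv X s) : ℝ) = 0 := by
      have hc : (inner ℝ (cross3 (deriv X s) (B (X s))) (deriv X s) : ℝ) = 0 := by
        rw [real_inner_comm]; exact inner_cross_left _ _
      rw [real_inner_smul_right, real_inner_smul_left, hc, inner_cross_left]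
      ring
    rwa [hz] at h
  have hconst := is_const_of_deriv_eq_zero (fun s => (hg s).differentiableAt)
    (fun s => (hg s).deriv) t 0
  rw [hconst, hV0]

lemma norm_V (hLor : ∀ t : ℝ, HasDerivAt (deriv X) (ω • cross3 (deriv X t) (B (X t))) t)
    (hV0 : deriv X 0 = v₀) (t : ℝ) : ‖deriv X t‖ = ‖v₀‖ := by
  have h := energy hLor hV0 t
  rw [real_inner_self_eq_norm_sq, real_inner_self_eq_norm_sq] at h
  have h1 : (0:ℝ) ≤ ‖deriv X t‖ := norm_nonneg _
  have h2 : (0:ℝ) ≤ ‖v₀‖ := norm_nonneg _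
  nlinarith

end Traj

section Key

variable {B : E3 → E3} {ω : ℝ} {X : ℝ → E3} {v₀ : E3}

set_option maxHeartbeats 2000000 in
lemma key_hasDerivAt (hB2 : ContDiff ℝ 2 B) (hB0 : ∀ y : E3, B y ≠ 0)
    (hdiv : ∀ y : E3, (∑ i : Fin 3, fderiv ℝ B y (EuclideanSpace.single i (1:ℝ)) i) = 0)
    (hω : ω ≠ 0) (hXd : Differentiable ℝ X)
    (hLor : ∀ t : ℝ, HasDerivAt (deriv X) (ω • cross3 (deriv X t) (B (X t))) t)
    (hV0 : deriv X 0 = v₀) (t : ℝ) :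
    HasDerivAt (fun s => (‖v₀‖^2 - (hvf B (X s) (deriv X s))^2)/(2*‖B (X s)‖)
        + ω⁻¹ * Psif B (‖v₀‖^2) (X s) (deriv X s))
      (ω⁻¹ * Gf B (‖v₀‖^2) (X t) (deriv X t)) t := by
  have hXV : ∀ s : ℝ, HasDerivAt X (deriv X s) s := fun s => (hXd s).hasDerivAt
  -- notation (literal terms)
  have hbb : (inner ℝ (bdir B (X t)) (bdir B (X t)) : ℝ) = 1 := bdir_inner_one hB0 (X t)
  have hub : (inner ℝ (uvf B (X t) (deriv X t)) (bdir B (X t)) : ℝ) = 0 := by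
    rw [uvf, inner_sub_left, real_inner_smul_left, hbb, hvf]; ring
  have hbQ : ∀ z : E3, (inner ℝ (bdir B (X t)) (Qf B (X t) z) : ℝ) = 0 :=
    fun z => rel_C hB2 hB0 (X t) z
  have hvu : deriv X t
      = uvf B (X t) (deriv X t) + hvf B (X t) (deriv X t) • bdir B (X t) := by
    rw [uvf]; abel
  -- derivative of the direction field along trajectory
  have hasb : HasDerivAt (fun s => bdir B (X s)) (Qf B (X t) (deriv X t)) t :=
    (bdir_diff hB2 hB0 (X t)).comp_hasDerivAt t (hXV t)
  have hasn : HasDerivAt (fun s => ‖B (X s)‖) (Nf B (X t) (deriv X t)) t :=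
    (nB_diff hB2 hB0 (X t)).comp_hasDerivAt t (hXV t)
  have hasQt : HasDerivAt (fun s => Qf B (X s)) (fderiv ℝ (Qf B) (X t) (deriv X t)) t :=
    (((contdiff_Qf hB2 hB0).differentiable one_ne_zero (X t)).hasFDerivAt).comp_hasDerivAt t (hXV t)
  have hasNt : HasDerivAt (fun s => Nf B (X s)) (fderiv ℝ (Nf B) (X t) (deriv X t)) t :=
    (((contdiff_Nf hB2 hB0).differentiable one_ne_zero (X t)).hasFDerivAt).comp_hasDerivAt t (hXV t)
  -- clean form of the Lorentz force
  have hasV : HasDerivAt (deriv X) ((ω*‖B (X t)‖) • wvf B (X t) (deriv X t)) t := by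
    have h1 : cross3 (deriv X t) (B (X t))
        = ‖B (X t)‖ • cross3 (deriv X t) (bdir B (X t)) := by
      conv_lhs => rw [B_eq_smul hB0 (X t)]
      rw [cross3_smul_right]
    have h2 : cross3 (deriv X t) (bdir B (X t)) = wvf B (X t) (deriv X t) := by
      conv_lhs => rw [hvu]
      rw [cross3_add_left, cross3_smul_left, cross3_self, smul_zero, add_zero, wvf]
    have h3 := hLor t
    rw [h1, h2, smul_smul] at h3
    exact h3
  -- h, u, w derivatives
  have hash : HasDerivAt (fun s => hvf B (X s) (deriv X s)) (Avf B (X t) (deriv X t)) t := by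
    have h1 := (hasV.inner ℝ hasb : HasDerivAt (fun s => hvf B (X s) (deriv X s)) _ t)
    have hwb : (inner ℝ ((ω*‖B (X t)‖) • wvf B (X t) (deriv X t)) (bdir B (X t)) : ℝ) = 0 := by
      rw [real_inner_smul_left, wvf, real_inner_comm, inner_cross_right, mul_zero]
    rw [show (inner ℝ (deriv X t) (Qf B (X t) (deriv X t)) : ℝ)
          + (inner ℝ ((ω*‖B (X t)‖) • wvf B (X t) (deriv X t)) (bdir B (X t)) : ℝ)
        = Avf B (X t) (deriv X t) from by rw [hwb, Avf]; ring] at h1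
    exact h1
  have hasu : HasDerivAt (fun s => uvf B (X s) (deriv X s))
      ((ω*‖B (X t)‖) • wvf B (X t) (deriv X t) + Rvf B (X t) (deriv X t)) t := by
    have h1 := hasV.sub (hash.smul hasb)
    have h2 : (ω*‖B (X t)‖) • wvf B (X t) (deriv X t)
          - (hvf B (X t) (deriv X t) • Qf B (X t) (deriv X t)
              + Avf B (X t) (deriv X t) • bdir B (X t))
        = (ω*‖B (X t)‖) • wvf B (X t) (deriv X t) + Rvf B (X t) (deriv X t) := by
      rw [Rvf]; abel
    rw [h2] at h1
    exact h1
  have hasw : HasDerivAt (fun s => wvf B (X s) (deriv X s))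
      (-((ω*‖B (X t)‖) • uvf B (X t) (deriv X t)) + Pvf B (X t) (deriv X t)) t := by
    have h1 := hasDerivAt_cross hasu hasb
    have h2 : cross3 ((ω*‖B (X t)‖) • wvf B (X t) (deriv X t) + Rvf B (X t) (deriv X t))
          (bdir B (X t)) + cross3 (uvf B (X t) (deriv X t)) (Qf B (X t) (deriv X t))
        = -((ω*‖B (X t)‖) • uvf B (X t) (deriv X t)) + Pvf B (X t) (deriv X t) := by
      rw [cross3_add_left, cross3_smul_left]
      rw [show cross3 (wvf B (X t) (deriv X t)) (bdir B (X t))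
            = -(uvf B (X t) (deriv X t)) from by
        rw [wvf, triple_cross, hub, hbb]; simp]
      rw [Rvf, cross3_sub_left, cross3_neg_left, cross3_smul_left, cross3_smul_left,
        cross3_self, Pvf]
      simp only [smul_zero, neg_zero, smul_neg]
      abel
    rw [h2] at h1
    exact h1
  -- scalar building blocks
  have hasσ : HasDerivAt (fun s => (inner ℝ (uvf B (X s) (deriv X s))
        (Qf B (X s) (wvf B (X s) (deriv X s))) : ℝ))
      ((inner ℝ (uvf B (X t) (deriv X t))
          (fderiv ℝ (Qf B) (X t) (deriv X t) (wvf B (X t) (deriv X t))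
            + Qf B (X t) (-((ω*‖B (X t)‖) • uvf B (X t) (deriv X t))
                + Pvf B (X t) (deriv X t))) : ℝ)
        + (inner ℝ ((ω*‖B (X t)‖) • wvf B (X t) (deriv X t) + Rvf B (X t) (deriv X t))
            (Qf B (X t) (wvf B (X t) (deriv X t))) : ℝ)) t :=
    hasu.inner ℝ (hasQt.clm_apply hasw)
  have hasτ : HasDerivAt (fun s => (inner ℝ (wvf B (X s) (deriv X s))
        (Qf B (X s) (bdir B (X s))) : ℝ))
      ((inner ℝ (wvf B (X t) (deriv X t))
          (fderiv ℝ (Qf B) (X t) (deriv X t) (bdir B (X t))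
            + Qf B (X t) (Qf B (X t) (deriv X t))) : ℝ)
        + (inner ℝ (-((ω*‖B (X t)‖) • uvf B (X t) (deriv X t)) + Pvf B (X t) (deriv X t))
            (Qf B (X t) (bdir B (X t))) : ℝ)) t :=
    hasw.inner ℝ (hasQt.clm_apply hasb)
  have hasρ : HasDerivAt (fun s => Nf B (X s) (wvf B (X s) (deriv X s)))
      (fderiv ℝ (Nf B) (X t) (deriv X t) (wvf B (X t) (deriv X t))
        + Nf B (X t) (-((ω*‖B (X t)‖) • uvf B (X t) (deriv X t))
            + Pvf B (X t) (deriv X t))) t :=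
    hasNt.clm_apply hasw
  -- the moment function
  have hn2 : (2:ℝ)*‖B (X t)‖ ≠ 0 := by have := nB_ne hB0 (X t); positivity
  have hasM := (((hash.pow 2).const_sub (‖v₀‖^2)).div (hasn.const_mul 2) hn2)
  -- Psi
  have hne1 : (‖B (X t)‖:ℝ)^2 ≠ 0 := by have := nB_ne hB0 (X t); positivity
  have hne2 : (2:ℝ)*‖B (X t)‖^2 ≠ 0 := by have := nB_ne hB0 (X t); positivity
  have hne3 : (2:ℝ)*‖B (X t)‖^3 ≠ 0 := by have := nB_ne hB0 (X t); positivity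
  have hasc1 := (hash.neg).div ((hasn.pow 2).const_mul 2) hne2
  have hasc2 := ((hash.pow 2).neg).div (hasn.pow 2) hne1
  have hasc3 := (((hash.pow 2).const_sub (‖v₀‖^2)).neg).div ((hasn.pow 3).const_mul 2) hne3
  have hasPsi := ((hasc1.mul hasσ).add (hasc2.mul hasτ)).add (hasc3.mul hasρ)
  have hasf := hasM.add (hasPsi.const_mul ω⁻¹)
  have hfun : (fun s => (‖v₀‖^2 - (hvf B (X s) (deriv X s))^2)/(2*‖B (X s)‖)
        + ω⁻¹ * Psif B (‖v₀‖^2) (X s) (deriv X s))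
      = (fun s => (‖v₀‖^2 - hvf B (X s) (deriv X s)^2)/(2*‖B (X s)‖)
        + ω⁻¹ * ((-(hvf B (X s) (deriv X s))/(2*‖B (X s)‖^2)
            * (inner ℝ (uvf B (X s) (deriv X s)) (Qf B (X s) (wvf B (X s) (deriv X s))) : ℝ)
          + (-(hvf B (X s) (deriv X s))^2/(‖B (X s)‖^2)
            * (inner ℝ (wvf B (X s) (deriv X s)) (Qf B (X s) (bdir B (X s))) : ℝ))
          + (-(‖v₀‖^2 - hvf B (X s) (deriv X s)^2)/(2*‖B (X s)‖^3)
            * (Nf B (X s) (wvf B (X s) (deriv X s))))))) := by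
    funext s
    rw [Psif]
  rw [hfun]
  refine hasf.congr_deriv ?_
  simp only [Pi.add_apply, Pi.sub_apply, Pi.mul_apply, Pi.div_apply, Pi.neg_apply, Pi.pow_apply]
  -- relations
  have hnn : ‖B (X t)‖ ≠ 0 := nB_ne hB0 (X t)
  have hA : Avf B (X t) (deriv X t)
      = (inner ℝ (uvf B (X t) (deriv X t)) (Qf B (X t) (uvf B (X t) (deriv X t))) : ℝ)
        + hvf B (X t) (deriv X t)
          * (inner ℝ (uvf B (X t) (deriv X t)) (Qf B (X t) (bdir B (X t))) : ℝ) := by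
    rw [Avf]
    conv_lhs => rw [hvu]
    simp only [inner_add_left, inner_add_right, _root_.map_add, _root_.map_smul,
      real_inner_smul_left, real_inner_smul_right, hbQ]
    ring
  have hNv : Nf B (X t) (deriv X t)
      = Nf B (X t) (uvf B (X t) (deriv X t))
        + hvf B (X t) (deriv X t) * Nf B (X t) (bdir B (X t)) := by
    conv_lhs => rw [hvu]
    simp [_root_.map_add, _root_.map_smul]
  have hNb : Nf B (X t) (bdir B (X t)) = -(‖B (X t)‖ * trQ (Qf B (X t))) := by
    have h0 := rel_B hB2 hB0 hdiv (X t)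
    simp only [Nf, Qf]
    linarith [h0]
  have hgyro : (inner ℝ (wvf B (X t) (deriv X t)) (Qf B (X t) (wvf B (X t) (deriv X t))) : ℝ)
      = (inner ℝ (uvf B (X t) (deriv X t)) (uvf B (X t) (deriv X t)) : ℝ) * trQ (Qf B (X t))
        - (inner ℝ (uvf B (X t) (deriv X t)) (Qf B (X t) (uvf B (X t) (deriv X t))) : ℝ) := by
    have hg := gyro_identity (Qf B (X t)) (uvf B (X t) (deriv X t)) (bdir B (X t)) hub hbb
    rw [hbQ] at hg
    rw [wvf]
    linarith [hg]
  have hen : (inner ℝ (uvf B (X t) (deriv X t)) (uvf B (X t) (deriv X t)) : ℝ)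
      = ‖v₀‖^2 - hvf B (X t) (deriv X t)^2 := by
    have he := energy hLor hV0 t
    simp only [uvf, inner_sub_left, inner_sub_right, real_inner_smul_left,
      real_inner_smul_right, hbb, real_inner_comm (bdir B (X t)) (deriv X t)]
    rw [he, real_inner_self_eq_norm_sq]
    simp only [hvf]
    rw [real_inner_comm (bdir B (X t)) (deriv X t)]
    ring
  rw [Gf]
  simp only [inner_add_left, inner_add_right, inner_neg_left, inner_neg_right,
    _root_.map_add, _root_.map_smul, _root_.map_neg, real_inner_smul_left, real_inner_smul_right,
    smul_neg, neg_smul]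
  rw [hA, hNv, hNb, hgyro, hen]
  push_cast
  set n := ‖B (X t)‖ with hn_def
  set h := hvf B (X t) (deriv X t) with hh_def
  set tr := trQ (Qf B (X t)) with htr_def
  set s1 := (inner ℝ (uvf B (X t) (deriv X t)) (Qf B (X t) (uvf B (X t) (deriv X t))) : ℝ)
  set s2 := (inner ℝ (uvf B (X t) (deriv X t)) (Qf B (X t) (bdir B (X t))) : ℝ)
  set s3 := (inner ℝ (uvf B (X t) (deriv X t)) (Qf B (X t) (wvf B (X t) (deriv X t))) : ℝ)
  set s4 := (inner ℝ (wvf B (X t) (deriv X t)) (Qf B (X t) (bdir B (X t))) : ℝ)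
  set s5 := Nf B (X t) (uvf B (X t) (deriv X t))
  set s6 := Nf B (X t) (wvf B (X t) (deriv X t))
  set s7 := (inner ℝ (uvf B (X t) (deriv X t))
      (fderiv ℝ (Qf B) (X t) (deriv X t) (wvf B (X t) (deriv X t))) : ℝ)
  set s8 := (inner ℝ (uvf B (X t) (deriv X t)) (Qf B (X t) (Pvf B (X t) (deriv X t))) : ℝ)
  set s9 := (inner ℝ (Rvf B (X t) (deriv X t)) (Qf B (X t) (wvf B (X t) (deriv X t))) : ℝ)
  set s10 := (inner ℝ (Pvf B (X t) (deriv X t)) (Qf B (X t) (bdir B (X t))) : ℝ)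
  set s11 := (inner ℝ (wvf B (X t) (deriv X t))
      (fderiv ℝ (Qf B) (X t) (deriv X t) (bdir B (X t))) : ℝ)
  set s12 := (inner ℝ (wvf B (X t) (deriv X t)) (Qf B (X t) (Qf B (X t) (deriv X t))) : ℝ)
  set s13 := fderiv ℝ (Nf B) (X t) (deriv X t) (wvf B (X t) (deriv X t))
  set s14 := Nf B (X t) (Pvf B (X t) (deriv X t))
  field_simp
  ring

end Key

section Final

variable {B : E3 → E3}

theorem main_thm (hB2 : ContDiff ℝ 2 B)
    (hdivg : ∀ y : E3, (∑ i : Fin 3, fderiv ℝ B y (EuclideanSpace.single i (1:ℝ)) i) = 0)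
    (hB0 : ∀ y : E3, B y ≠ 0) (x₀ v₀ : E3)
    (xω : ℝ → ℝ → E3)
    (hxω : ∀ ω : ℝ, 0 < ω → (xω ω 0 = x₀ ∧ deriv (xω ω) 0 = v₀ ∧ Differentiable ℝ (xω ω) ∧
      ∀ t : ℝ, HasDerivAt (deriv (xω ω)) (ω • cross3 (deriv (xω ω) t) (B (xω ω t))) t)) :
    ∀ T > (0:ℝ),
      Filter.Tendsto (fun ω : ℝ => ⨆ t : Set.Icc (0:ℝ) T,
          |(‖v₀‖ ^ 2 - (inner ℝ (deriv (xω ω) t.1) (bdir B (xω ω t.1)) : ℝ) ^ 2)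
              / (2 * ‖B (xω ω t.1)‖)
            - (‖v₀‖ ^ 2 - (inner ℝ v₀ (bdir B x₀) : ℝ) ^ 2) / (2 * ‖B x₀‖)|)
        Filter.atTop (𝓝 0) := by
  intro T hT
  have hKc : IsCompact ((Metric.closedBall x₀ (‖v₀‖*T)) ×ˢ (Metric.sphere (0:E3) ‖v₀‖)) :=
    (isCompact_closedBall _ _).prod (isCompact_sphere _ _)
  obtain ⟨CG, hCG⟩ := hKc.exists_bound_of_continuousOn
    ((cont_Gf hB2 hB0 (‖v₀‖^2)).continuousOn)
  obtain ⟨CP, hCP⟩ := hKc.exists_bound_of_continuousOn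
    ((cont_Psif hB2 hB0 (‖v₀‖^2)).continuousOn)
  have hx₀K : (x₀, v₀) ∈ (Metric.closedBall x₀ (‖v₀‖*T)) ×ˢ (Metric.sphere (0:E3) ‖v₀‖) := by
    constructor
    · exact Metric.mem_closedBall_self (mul_nonneg (norm_nonneg _) hT.le)
    · simp [dist_eq_norm]
  have hCG0 : 0 ≤ CG := le_trans (norm_nonneg _) (hCG _ hx₀K)
  have hCP0 : 0 ≤ CP := le_trans (norm_nonneg _) (hCP _ hx₀K)
  refine squeeze_zero' (g := fun ω => (CG*T + 2*CP) * ω⁻¹)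
    (Filter.Eventually.of_forall (fun ω => Real.iSup_nonneg (fun t => abs_nonneg _))) ?_ ?_
  · filter_upwards [Filter.eventually_gt_atTop 0] with ω hω
    obtain ⟨hX0, hV0, hXd, hLor⟩ := hxω ω hω
    have hXV : ∀ s : ℝ, HasDerivAt (xω ω) (deriv (xω ω) s) s := fun s => (hXd s).hasDerivAt
    have hVnorm : ∀ s : ℝ, ‖deriv (xω ω) s‖ = ‖v₀‖ := norm_V hLor hV0
    have hmem : ∀ s ∈ Set.Icc (0:ℝ) T,
        (xω ω s, deriv (xω ω) s) ∈
          (Metric.closedBall x₀ (‖v₀‖*T)) ×ˢ (Metric.sphere (0:E3) ‖v₀‖) := by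
      intro s hs
      constructor
      · have hseg := norm_image_sub_le_of_norm_deriv_le_segment'
          (f := xω ω) (f' := deriv (xω ω)) (a := 0) (b := T) (C := ‖v₀‖)
          (fun r _ => (hXV r).hasDerivWithinAt)
          (fun r _ => le_of_eq (hVnorm r)) s hs
        rw [hX0] at hseg
        rw [Metric.mem_closedBall, dist_eq_norm]
        have h2 : ‖v₀‖*(s-0) ≤ ‖v₀‖*T := by
          have := norm_nonneg v₀
          nlinarith [hs.1, hs.2]
        exact hseg.trans h2
      · simp [dist_eq_norm, hVnorm s]
    have hkey : ∀ s : ℝ, HasDerivAt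
        (fun r => (‖v₀‖^2 - (hvf B (xω ω r) (deriv (xω ω) r))^2)/(2*‖B (xω ω r)‖)
          + ω⁻¹ * Psif B (‖v₀‖^2) (xω ω r) (deriv (xω ω) r))
        (ω⁻¹ * Gf B (‖v₀‖^2) (xω ω s) (deriv (xω ω) s)) s :=
      fun s => key_hasDerivAt hB2 hB0 hdivg hω.ne' hXd hLor hV0 s
    have hFseg := norm_image_sub_le_of_norm_deriv_le_segment'
      (f := fun r => (‖v₀‖^2 - (hvf B (xω ω r) (deriv (xω ω) r))^2)/(2*‖B (xω ω r)‖)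
        + ω⁻¹ * Psif B (‖v₀‖^2) (xω ω r) (deriv (xω ω) r))
      (f' := fun s => ω⁻¹ * Gf B (‖v₀‖^2) (xω ω s) (deriv (xω ω) s))
      (a := 0) (b := T) (C := ω⁻¹ * CG)
      (fun s _ => (hkey s).hasDerivWithinAt)
      (fun s hs => by
        rw [Real.norm_eq_abs, abs_mul, abs_inv, abs_of_pos hω]
        have h3 := hCG _ (hmem s (Set.Ico_subset_Icc_self hs))
        rw [Real.norm_eq_abs] at h3
        exact mul_le_mul_of_nonneg_left h3 (inv_nonneg.mpr hω.le))
    apply Real.iSup_le _ (by positivity)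
    rintro ⟨t, ht⟩
    have h1 := hFseg t ht
    rw [Real.norm_eq_abs] at h1
    have hΨt : |Psif B (‖v₀‖^2) (xω ω t) (deriv (xω ω) t)| ≤ CP := by
      have := hCP _ (hmem t ht); rwa [Real.norm_eq_abs] at this
    have hΨ0 : |Psif B (‖v₀‖^2) (xω ω 0) (deriv (xω ω) 0)| ≤ CP := by
      have := hCP _ (hmem 0 ⟨le_refl 0, hT.le⟩); rwa [Real.norm_eq_abs] at this
    have hμ0 : (‖v₀‖ ^ 2 - (inner ℝ v₀ (bdir B x₀) : ℝ) ^ 2) / (2 * ‖B x₀‖)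
        = (‖v₀‖^2 - (hvf B (xω ω 0) (deriv (xω ω) 0))^2)/(2*‖B (xω ω 0)‖) := by
      rw [hX0, hV0, hvf]
    have hμt : (‖v₀‖ ^ 2 - (inner ℝ (deriv (xω ω) t) (bdir B (xω ω t)) : ℝ) ^ 2)
          / (2 * ‖B (xω ω t)‖)
        = (‖v₀‖^2 - (hvf B (xω ω t) (deriv (xω ω) t))^2)/(2*‖B (xω ω t)‖) := by
      rw [hvf]
    rw [hμ0, hμt]
    have hsplit : (‖v₀‖^2 - (hvf B (xω ω t) (deriv (xω ω) t))^2)/(2*‖B (xω ω t)‖)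
        - (‖v₀‖^2 - (hvf B (xω ω 0) (deriv (xω ω) 0))^2)/(2*‖B (xω ω 0)‖)
      = ((‖v₀‖^2 - (hvf B (xω ω t) (deriv (xω ω) t))^2)/(2*‖B (xω ω t)‖)
          + ω⁻¹ * Psif B (‖v₀‖^2) (xω ω t) (deriv (xω ω) t)
        - ((‖v₀‖^2 - (hvf B (xω ω 0) (deriv (xω ω) 0))^2)/(2*‖B (xω ω 0)‖)
          + ω⁻¹ * Psif B (‖v₀‖^2) (xω ω 0) (deriv (xω ω) 0)))
        - ω⁻¹ * (Psif B (‖v₀‖^2) (xω ω t) (deriv (xω ω) t)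
              - Psif B (‖v₀‖^2) (xω ω 0) (deriv (xω ω) 0)) := by
      ring
    rw [hsplit]
    have habs : ∀ a b : ℝ, |a - b| ≤ |a| + |b| := fun a b => abs_sub a b
    have h4 : |ω⁻¹ * (Psif B (‖v₀‖^2) (xω ω t) (deriv (xω ω) t)
          - Psif B (‖v₀‖^2) (xω ω 0) (deriv (xω ω) 0))| ≤ ω⁻¹ * (2*CP) := by
      rw [abs_mul, abs_inv, abs_of_pos hω]
      have h5 : |Psif B (‖v₀‖^2) (xω ω t) (deriv (xω ω) t)
          - Psif B (‖v₀‖^2) (xω ω 0) (deriv (xω ω) 0)| ≤ 2*CP :=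
        le_trans (habs _ _) (by linarith)
      exact mul_le_mul_of_nonneg_left h5 (inv_nonneg.mpr hω.le)
    have h6 := le_trans (habs _ _) (add_le_add h1 h4)
    have h7 : ω⁻¹ * CG * (t - 0) + ω⁻¹ * (2*CP) ≤ (CG*T + 2*CP) * ω⁻¹ := by
      have h8 : ω⁻¹ * CG * t ≤ ω⁻¹ * CG * T :=
        mul_le_mul_of_nonneg_left ht.2 (by positivity)
      have h9 : (0:ℝ) < ω⁻¹ := by positivity
      nlinarith
    calc |_ - _| ≤ ω⁻¹ * CG * (t - 0) + ω⁻¹ * (2*CP) := h6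
      _ ≤ (CG*T + 2*CP) * ω⁻¹ := h7
  · have h10 := (tendsto_inv_atTop_zero (𝕜 := ℝ)).const_mul (CG*T + 2*CP)
    simpa using h10

end Final

theorem adiabatic_invariance_of_magnetic_moment
    (B : E3 → E3) (hB : IsCkBounded 2 B) (hdiv : ∀ y : E3, divg B y = 0)
    (hB0 : ∀ y : E3, B y ≠ 0) (x₀ v₀ : E3)
    (xω : ℝ → ℝ → E3) (hxω : ∀ ω : ℝ, 0 < ω → IsLorentzSol B ω x₀ v₀ (xω ω)) :
    ∀ T > (0:ℝ),
      Tendsto (fun ω : ℝ => ⨆ t : Set.Icc (0:ℝ) T,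
          |(‖v₀‖ ^ 2 - (inner ℝ (deriv (xω ω) t.1) (bdir B (xω ω t.1)) : ℝ) ^ 2)
              / (2 * ‖B (xω ω t.1)‖)
            - (‖v₀‖ ^ 2 - (inner ℝ v₀ (bdir B x₀) : ℝ) ^ 2) / (2 * ‖B x₀‖)|)
        atTop (𝓝 0) := by
  have hB2 : ContDiff ℝ 2 B := hB.1
  exact main_thm hB2 (fun y => hdiv y) hB0 x₀ v₀ xω (fun ω hω => hxω ω hω)
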